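/- Let T : g^{n+1} → ℝ and T' : g^{m+1} → ℝ be invariant multilinear forms on g, let B be an invariant symmetric bilinear form on g whose restriction to h is nondegenerate, let (e_β) be a basis of h and (e^β) the basis of h dual to it with respect to B (i.e. B(e_β, e^γ) = δ_β^γ). Define the multilinear form S : k^n × k^m → ℝ by S(x_1,…,x_n; y_1,…,y_m) = ∑_β T(x_1,…,x_n, e_β)·T'(e^β, y_1,…,y_m) (contraction of the last index of T with the first index of T' over the subalgebra h). Then S is h-invariant: for every z ∈ h and all x_1,…,x_n, y_1,…,y_m ∈ k one has ∑_{s=1}^n S(x_1,…,⁅z,x_s⁆,…,x_n; y_1,…,y_m) + ∑_{t=1}^m S(x_1,…,x_n; y_1,…,⁅z,y_t⁆,…,y_m) = 0 (note that ⁅z,x_s⁆ and ⁅z,y_t⁆ lie in k by reductivity, so all arguments stay in k). -/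

import Mathlib

open Finset

/-- Let `g = h ⊕ k` be a reductive decomposition of a
finite-dimensional real Lie algebra `g` with respect to the Lie subalgebra `h`.
Let `T`, `T'` be invariant multilinear forms on `g` of `n+1` resp. `m+1`
arguments, `B` an invariant symmetric bilinear form whose restriction to `h`
is nondegenerate, `e` a basis of `h` and `e'` the `B`-dual basis of `h`.
Then the contraction
`S(x₁,…,xₙ; y₁,…,y_m) = ∑ β, T(x₁,…,xₙ,e β) * T'(e' β, y₁,…,y_m)`
is `h`-invariant on `k`-arguments. -/
theorem contraction_over_subalgebra_h_invariant
    {g : Type*} [LieRing g] [LieAlgebra ℝ g] [FiniteDimensional ℝ g]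
    (h : LieSubalgebra ℝ g) (k : Submodule ℝ g)
    (hcompl : IsCompl h.toSubmodule k)
    (hred : ∀ z ∈ h, ∀ x ∈ k, ⁅z, x⁆ ∈ k)
    (n m : ℕ)
    (T : MultilinearMap ℝ (fun _ : Fin (n+1) => g) ℝ)
    (T' : MultilinearMap ℝ (fun _ : Fin (m+1) => g) ℝ)
    (hT : ∀ (y : g) (v : Fin (n+1) → g),
      ∑ s, T (Function.update v s ⁅y, v s⁆) = 0)
    (hT' : ∀ (y : g) (v : Fin (m+1) → g),
      ∑ s, T' (Function.update v s ⁅y, v s⁆) = 0)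
    (B : g →ₗ[ℝ] g →ₗ[ℝ] ℝ)
    (hBsymm : ∀ x y, B x y = B y x)
    (hBinv : ∀ z x y : g, B ⁅z, x⁆ y + B x ⁅z, y⁆ = 0)
    (hBnd : ∀ x ∈ h, (∀ y ∈ h, B x y = 0) → x = 0)
    (ι : Type*) [Fintype ι] [DecidableEq ι]
    (e : Module.Basis ι ℝ h) (e' : ι → h)
    (hdual : ∀ β γ, B (e β : g) (e' γ : g) = if β = γ then 1 else 0)
    (z : g) (hz : z ∈ h)
    (x : Fin n → g) (hx : ∀ i, x i ∈ k)
    (y : Fin m → g) (hy : ∀ i, y i ∈ k) :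
    (∑ s : Fin n, ∑ β : ι,
        T (Fin.snoc (Function.update x s ⁅z, x s⁆) (e β : g)) *
          T' (Fin.cons (e' β : g) y)) +
    (∑ t : Fin m, ∑ β : ι,
        T (Fin.snoc x (e β : g)) *
          T' (Fin.cons (e' β : g) (Function.update y t ⁅z, y t⁆))) = 0 := by
  classical
  -- linear maps in the contracted slot
  set f : g →ₗ[ℝ] ℝ := T.toLinearMap (Fin.snoc x 0) (Fin.last n) with hf
  set g' : g →ₗ[ℝ] ℝ := T'.toLinearMap (Fin.cons 0 y) 0 with hg'
  have hfval : ∀ a : g, f a = T (Fin.snoc x a) := by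
    intro a
    simp [hf, MultilinearMap.toLinearMap, Fin.update_snoc_last]
  have hgval : ∀ a : g, g' a = T' (Fin.cons a y) := by
    intro a
    simp [hg', MultilinearMap.toLinearMap, Fin.update_cons_zero]
  -- expansion in the basis `e`
  have expB : ∀ a ∈ h, a = ∑ γ : ι, B a (e' γ) • (e γ : g) := by
    intro a ha
    have h1 : ((⟨a, ha⟩ : h) : g) = ∑ γ : ι, e.repr ⟨a, ha⟩ γ • (e γ : g) := by
      conv_lhs => rw [← e.sum_repr ⟨a, ha⟩]
      push_cast [Submodule.coe_sum]
      rfl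
    have h2 : ∀ γ, B a (e' γ) = e.repr ⟨a, ha⟩ γ := by
      intro γ
      have hd2 : ∀ β, B (e' γ : g) (e β : g) = if β = γ then 1 else 0 := by
        intro β; rw [hBsymm]; exact hdual β γ
      rw [hBsymm]
      calc B (e' γ : g) a
          = B (e' γ : g) (∑ β : ι, e.repr ⟨a, ha⟩ β • (e β : g)) := by rw [← h1]
        _ = e.repr ⟨a, ha⟩ γ := by rw [map_sum]; simp [hd2]
    simp only [h2]
    exact h1
  -- expansion in the family `e'` (uses nondegeneracy)
  have expB' : ∀ a ∈ h, a = ∑ β : ι, B (e β : g) a • (e' β : g) := by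
    intro a ha
    set d : g := a - ∑ β : ι, B (e β : g) a • (e' β : g) with hd
    have hdh : d ∈ h := by
      apply sub_mem ha
      exact Submodule.sum_mem _ fun β _ => Submodule.smul_mem _ _ (e' β).2
    have hde : ∀ γ, B (e γ : g) d = 0 := by
      intro γ
      simp [hd, hdual, hBsymm (e γ : g) a]
    have hdall : ∀ w ∈ h, B d w = 0 := by
      intro w hw
      rw [hBsymm]
      have h1 : ((⟨w, hw⟩ : h) : g) = ∑ γ : ι, e.repr ⟨w, hw⟩ γ • (e γ : g) := by
        conv_lhs => rw [← e.sum_repr ⟨w, hw⟩]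
        push_cast [Submodule.coe_sum]
        rfl
      calc B w d = B (∑ γ : ι, e.repr ⟨w, hw⟩ γ • (e γ : g)) d := by rw [← h1]
        _ = 0 := by simp [hde]
    have hd0 : d = 0 := hBnd d hdh hdall
    rw [hd] at hd0
    exact sub_eq_zero.mp hd0
  -- key swap identity
  have key : ∑ β : ι, f ⁅z, (e β : g)⁆ * g' (e' β : g)
      + ∑ β : ι, f (e β : g) * g' ⁅z, (e' β : g)⁆ = 0 := by
    have hlie1 : ∀ β, ⁅z, (e β : g)⁆ ∈ h := fun β => h.lie_mem hz (e β).2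
    have hlie2 : ∀ β, ⁅z, (e' β : g)⁆ ∈ h := fun β => h.lie_mem hz (e' β).2
    have e1 : ∀ β, f ⁅z, (e β : g)⁆
        = ∑ γ : ι, B ⁅z, (e β : g)⁆ (e' γ : g) * f (e γ : g) := by
      intro β
      conv_lhs => rw [expB _ (hlie1 β)]
      simp [smul_eq_mul]
    have e2 : ∀ β, g' ⁅z, (e' β : g)⁆
        = ∑ γ : ι, B (e γ : g) ⁅z, (e' β : g)⁆ * g' (e' γ : g) := by
      intro β
      conv_lhs => rw [expB' _ (hlie2 β)]
      simp [smul_eq_mul]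
    simp only [e1, e2, Finset.sum_mul, Finset.mul_sum]
    rw [Finset.sum_comm (γ := ι)]
    rw [← Finset.sum_add_distrib]
    apply Finset.sum_eq_zero
    intro γ _
    rw [← Finset.sum_add_distrib]
    apply Finset.sum_eq_zero
    intro β _
    have hbi := hBinv z (e β : g) (e' γ : g)
    have hrw : B ⁅z, (e β : g)⁆ (e' γ : g) = - B (e β : g) ⁅z, (e' γ : g)⁆ := by
      linarith
    rw [hrw]
    ring
  -- invariance of T applied to snoc
  have inv1 : ∀ β : ι, ∑ s : Fin n,
      T (Fin.snoc (Function.update x s ⁅z, x s⁆) (e β : g))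
      = - T (Fin.snoc x ⁅z, (e β : g)⁆) := by
    intro β
    have h0 := hT z (Fin.snoc x (e β : g))
    rw [Fin.sum_univ_castSucc] at h0
    have hlast : Function.update (Fin.snoc x (e β : g) : Fin (n+1) → g) (Fin.last n)
        ⁅z, (Fin.snoc x (e β : g) : Fin (n+1) → g) (Fin.last n)⁆
        = (Fin.snoc x ⁅z, (e β : g)⁆ : Fin (n+1) → g) := by
      rw [Fin.snoc_last, Fin.update_snoc_last]
    have hcast : ∀ i : Fin n, Function.update (Fin.snoc x (e β : g) : Fin (n+1) → g)
        i.castSucc ⁅z, (Fin.snoc x (e β : g) : Fin (n+1) → g) i.castSucc⁆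
        = (Fin.snoc (Function.update x i ⁅z, x i⁆) (e β : g) : Fin (n+1) → g) := by
      intro i
      rw [Fin.snoc_castSucc, Fin.snoc_update]
    simp only [hlast, hcast] at h0
    linarith
  -- invariance of T' applied to cons
  have inv2 : ∀ β : ι, ∑ t : Fin m,
      T' (Fin.cons (e' β : g) (Function.update y t ⁅z, y t⁆))
      = - T' (Fin.cons ⁅z, (e' β : g)⁆ y) := by
    intro β
    have h0 := hT' z (Fin.cons (e' β : g) y)
    rw [Fin.sum_univ_succ] at h0
    have hzero : Function.update (Fin.cons (e' β : g) y : Fin (m+1) → g) 0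
        ⁅z, (Fin.cons (e' β : g) y : Fin (m+1) → g) 0⁆
        = (Fin.cons ⁅z, (e' β : g)⁆ y : Fin (m+1) → g) := by
      rw [Fin.cons_zero, Fin.update_cons_zero]
    have hsucc : ∀ j : Fin m, Function.update (Fin.cons (e' β : g) y : Fin (m+1) → g)
        j.succ ⁅z, (Fin.cons (e' β : g) y : Fin (m+1) → g) j.succ⁆
        = (Fin.cons (e' β : g) (Function.update y j ⁅z, y j⁆) : Fin (m+1) → g) := by
      intro j
      rw [Fin.cons_succ, Fin.cons_update]
    simp only [hzero, hsucc] at h0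
    linarith
  calc (∑ s : Fin n, ∑ β : ι,
        T (Fin.snoc (Function.update x s ⁅z, x s⁆) (e β : g)) *
          T' (Fin.cons (e' β : g) y)) +
    (∑ t : Fin m, ∑ β : ι,
        T (Fin.snoc x (e β : g)) *
          T' (Fin.cons (e' β : g) (Function.update y t ⁅z, y t⁆)))
      = (∑ β : ι, (∑ s : Fin n,
          T (Fin.snoc (Function.update x s ⁅z, x s⁆) (e β : g))) *
          T' (Fin.cons (e' β : g) y)) +
        (∑ β : ι, T (Fin.snoc x (e β : g)) *
          (∑ t : Fin m, T' (Fin.cons (e' β : g) (Function.update y t ⁅z, y t⁆)))) := by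
        congr 1
        · rw [Finset.sum_comm]
          exact Finset.sum_congr rfl fun β _ => (Finset.sum_mul ..).symm
        · rw [Finset.sum_comm]
          exact Finset.sum_congr rfl fun β _ => (Finset.mul_sum ..).symm
    _ = -(∑ β : ι, f ⁅z, (e β : g)⁆ * g' (e' β : g)
          + ∑ β : ι, f (e β : g) * g' ⁅z, (e' β : g)⁆) := by
        simp only [inv1, inv2, hfval, hgval]
        rw [neg_add, ← Finset.sum_neg_distrib, ← Finset.sum_neg_distrib]
        congr 1 <;> (apply Finset.sum_congr rfl; intro β _; ring)
    _ = 0 := by rw [key, neg_zero]
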